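/- Any automorphism M ∈ GL(2,K) of order 2 of a binary cubic form g with nonzero discriminant (i.e., g^M = g under the twisted action, M² = I, M ≠ I) has determinant −1, and g has a root in P¹(K). Conversely, if g has a K-rational root then g admits an automorphism of order 2 (e.g., Y(X²−(Δ/4)Y²) is fixed by diag(1,−1) under the twisted action). -/
import Mathlib


/-- Discriminant of the binary cubic `aX³+bX²Y+cXY²+dY³`. -/
def cubicDisc {K : Type*} [CommRing K] (a b c d : K) : K :=
  b^2*c^2 - 4*a*c^3 - 4*b^3*d - 27*a^2*d^2 + 18*a*b*c*d

/-- Coefficient of `X³` in `g(rX+tY, sX+uY)`. -/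
def tA {K : Type*} [CommRing K] (a b c d r s t u : K) : K :=
  a*r^3 + b*r^2*s + c*r*s^2 + d*s^3

/-- Coefficient of `X²Y` in `g(rX+tY, sX+uY)`. -/
def tB {K : Type*} [CommRing K] (a b c d r s t u : K) : K :=
  3*a*r^2*t + b*(r^2*u + 2*r*s*t) + c*(2*r*s*u + s^2*t) + 3*d*s^2*u

/-- Coefficient of `XY²` in `g(rX+tY, sX+uY)`. -/
def tC {K : Type*} [CommRing K] (a b c d r s t u : K) : K :=
  3*a*r*t^2 + b*(2*r*t*u + s*t^2) + c*(r*u^2 + 2*s*t*u) + 3*d*s*u^2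

/-- Coefficient of `Y³` in `g(rX+tY, sX+uY)`. -/
def tD {K : Type*} [CommRing K] (a b c d r s t u : K) : K :=
  a*t^3 + b*t^2*u + c*t*u^2 + d*u^3

theorem my_disc_inv {K : Type*} [CommRing K] (a b c d r s t u : K) :
    cubicDisc (tA a b c d r s t u) (tB a b c d r s t u) (tC a b c d r s t u)
      (tD a b c d r s t u) = (r*u - s*t)^6 * cubicDisc a b c d := by
  simp only [cubicDisc, tA, tB, tC, tD]; ring

theorem my_eval_act {K : Type*} [CommRing K] (a b c d r s t u p q : K) :
    tA a b c d r s t u * p^3 + tB a b c d r s t u * p^2*q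
      + tC a b c d r s t u * p*q^2 + tD a b c d r s t u * q^3
    = a*(r*p+t*q)^3 + b*(r*p+t*q)^2*(s*p+u*q)
      + c*(r*p+t*q)*(s*p+u*q)^2 + d*(s*p+u*q)^3 := by
  simp only [tA, tB, tC, tD]; ring

theorem my_shear_tC {K : Type*} [CommRing K] (a b c d r s t u τ : K) :
    tC a b c d r s (τ*r+t) (τ*s+u)
      = 3*(tA a b c d r s t u)*τ^2 + 2*(tB a b c d r s t u)*τ
        + tC a b c d r s t u := by
  simp only [tA, tB, tC]; ring

theorem my_refl_tA {K : Type*} [CommRing K] (a b c d E F G H : K)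
    (hA : tA a b c d E F G H = 0) (hC : tC a b c d E F G H = 0) :
    tA a b c d (E*H+F*G) (2*F*H) (-(2*E*G)) (-(E*H+F*G))
      = -(a*(E*H-F*G)^3) := by
  simp only [tA, tC] at hA hC ⊢
  linear_combination 2*H^3*hA + 2*F^2*H*hC

theorem my_refl_tB {K : Type*} [CommRing K] (a b c d E F G H : K)
    (hA : tA a b c d E F G H = 0) (hC : tC a b c d E F G H = 0) :
    tB a b c d (E*H+F*G) (2*F*H) (-(2*E*G)) (-(E*H+F*G))
      = -(b*(E*H-F*G)^3) := by
  simp only [tA, tB, tC] at hA hC ⊢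
  linear_combination (-6*G*H^2)*hA + (-(4*E*F*H) - 2*F^2*G)*hC

theorem my_refl_tC {K : Type*} [CommRing K] (a b c d E F G H : K)
    (hA : tA a b c d E F G H = 0) (hC : tC a b c d E F G H = 0) :
    tC a b c d (E*H+F*G) (2*F*H) (-(2*E*G)) (-(E*H+F*G))
      = -(c*(E*H-F*G)^3) := by
  simp only [tA, tC] at hA hC ⊢
  linear_combination (6*G^2*H)*hA + (2*E^2*H + 4*E*F*G)*hC

theorem my_refl_tD {K : Type*} [CommRing K] (a b c d E F G H : K)
    (hA : tA a b c d E F G H = 0) (hC : tC a b c d E F G H = 0) :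
    tD a b c d (E*H+F*G) (2*F*H) (-(2*E*G)) (-(E*H+F*G))
      = -(d*(E*H-F*G)^3) := by
  simp only [tA, tC, tD] at hA hC ⊢
  linear_combination (-2*G^3)*hA + (-2*E^2*G)*hC

theorem my_conv_aux2 {K : Type*} [Field K] (h2 : (2:K) ≠ 0)
    (a b c d E F G H : K) (hdet : E*H - F*G ≠ 0)
    (hA : tA a b c d E F G H = 0) (hC : tC a b c d E F G H = 0) :
    ∃ M : Matrix (Fin 2) (Fin 2) K, M.det ≠ 0 ∧ M^2 = 1 ∧ M ≠ 1 ∧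
      tA a b c d (M 0 0) (M 0 1) (M 1 0) (M 1 1) = M.det * a ∧
      tB a b c d (M 0 0) (M 0 1) (M 1 0) (M 1 1) = M.det * b ∧
      tC a b c d (M 0 0) (M 0 1) (M 1 0) (M 1 1) = M.det * c ∧
      tD a b c d (M 0 0) (M 0 1) (M 1 0) (M 1 1) = M.det * d := by
  have hk : (E*H - F*G)⁻¹ * (E*H - F*G) = 1 := inv_mul_cancel₀ hdet
  set k : K := (E*H - F*G)⁻¹ with hkdef
  have hMdet : (!![k*(E*H+F*G), k*(2*F*H); k*(-(2*E*G)), k*(-(E*H+F*G))] :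
      Matrix (Fin 2) (Fin 2) K).det = -1 := by
    rw [Matrix.det_fin_two_of]
    linear_combination (-(1:K) - k*(E*H-F*G)) * hk
  have e00 : (!![k*(E*H+F*G), k*(2*F*H); k*(-(2*E*G)), k*(-(E*H+F*G))] :
      Matrix (Fin 2) (Fin 2) K) 0 0 = k*(E*H+F*G) := by simp
  have e01 : (!![k*(E*H+F*G), k*(2*F*H); k*(-(2*E*G)), k*(-(E*H+F*G))] :
      Matrix (Fin 2) (Fin 2) K) 0 1 = k*(2*F*H) := by simp
  have e10 : (!![k*(E*H+F*G), k*(2*F*H); k*(-(2*E*G)), k*(-(E*H+F*G))] :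
      Matrix (Fin 2) (Fin 2) K) 1 0 = k*(-(2*E*G)) := by simp
  have e11 : (!![k*(E*H+F*G), k*(2*F*H); k*(-(2*E*G)), k*(-(E*H+F*G))] :
      Matrix (Fin 2) (Fin 2) K) 1 1 = k*(-(E*H+F*G)) := by simp
  refine ⟨!![k*(E*H+F*G), k*(2*F*H); k*(-(2*E*G)), k*(-(E*H+F*G))],
    ?_, ?_, ?_, ?_, ?_, ?_, ?_⟩
  · rw [hMdet]; exact neg_ne_zero.mpr one_ne_zero
  · rw [pow_two]
    ext i j
    fin_cases i <;> fin_cases j <;>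
      simp [Matrix.mul_apply, Fin.sum_univ_two, Matrix.one_apply]
    · linear_combination ((1:K) + k*(E*H-F*G)) * hk
    · ring
    · ring
    · linear_combination ((1:K) + k*(E*H-F*G)) * hk
  · intro h
    have h00 := congrFun (congrFun h 0) 0
    have h11 := congrFun (congrFun h 1) 1
    simp [Matrix.one_apply] at h00 h11
    exact h2 (by linear_combination (-1 : K)*h00 - h11)
  · have := my_refl_tA a b c d E F G H hA hC
    rw [hMdet]
    rw [e00, e01, e10, e11]
    simp only [tA] at this ⊢
    linear_combination k^3 * this - a*((k*(E*H-F*G))^2 + k*(E*H-F*G) + 1) * hk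
  · have := my_refl_tB a b c d E F G H hA hC
    rw [hMdet]
    rw [e00, e01, e10, e11]
    simp only [tB] at this ⊢
    linear_combination k^3 * this - b*((k*(E*H-F*G))^2 + k*(E*H-F*G) + 1) * hk
  · have := my_refl_tC a b c d E F G H hA hC
    rw [hMdet]
    rw [e00, e01, e10, e11]
    simp only [tC] at this ⊢
    linear_combination k^3 * this - c*((k*(E*H-F*G))^2 + k*(E*H-F*G) + 1) * hk
  · have := my_refl_tD a b c d E F G H hA hC
    rw [hMdet]
    rw [e00, e01, e10, e11]
    simp only [tD] at this ⊢
    linear_combination k^3 * this - d*((k*(E*H-F*G))^2 + k*(E*H-F*G) + 1) * hk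

theorem my_conv_aux {K : Type*} [Field K] (h2 : (2:K) ≠ 0)
    (a b c d r s t u : K) (hdet : r*u - s*t ≠ 0)
    (hΔ : cubicDisc a b c d ≠ 0)
    (hroot : tA a b c d r s t u = 0) :
    ∃ E F G H : K, (E*H - F*G ≠ 0) ∧ tA a b c d E F G H = 0 ∧
      tC a b c d E F G H = 0 := by
  have hb1 : tB a b c d r s t u ≠ 0 := by
    intro h0
    have h6 := my_disc_inv a b c d r s t u
    rw [hroot, h0] at h6
    have hz : cubicDisc (0:K) 0 (tC a b c d r s t u) (tD a b c d r s t u) = 0 := by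
      simp [cubicDisc]
    rw [hz] at h6
    rcases mul_eq_zero.mp h6.symm with h | h
    · exact hdet (pow_eq_zero_iff (by norm_num)|>.mp h)
    · exact hΔ h
  set τ : K := -(tC a b c d r s t u) / (2 * tB a b c d r s t u) with hτ
  refine ⟨r, s, τ*r+t, τ*s+u, ?_, ?_, ?_⟩
  · intro h; exact hdet (by linear_combination h)
  · simp only [tA] at hroot ⊢; linear_combination hroot
  · rw [my_shear_tC, hroot, hτ]
    field_simp
    ring

theorem my_forward {K : Type*} [Field K]
    (h2 : (2:K) ≠ 0)
    (a b c d : K) (hΔ : cubicDisc a b c d ≠ 0) :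
    ∀ M : Matrix (Fin 2) (Fin 2) K, M.det ≠ 0 → M^2 = 1 → M ≠ 1 →
      (tA a b c d (M 0 0) (M 0 1) (M 1 0) (M 1 1) = M.det * a ∧
       tB a b c d (M 0 0) (M 0 1) (M 1 0) (M 1 1) = M.det * b ∧
       tC a b c d (M 0 0) (M 0 1) (M 1 0) (M 1 1) = M.det * c ∧
       tD a b c d (M 0 0) (M 0 1) (M 1 0) (M 1 1) = M.det * d) →
      (M.det = -1 ∧ ∃ p q : K, ¬(p = 0 ∧ q = 0) ∧
        a*p^3 + b*p^2*q + c*p*q^2 + d*q^3 = 0) := by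
  intro M hMdet hM2 hM1 ⟨fA, fB, fC, fD⟩
  have hsq := hM2
  rw [pow_two] at hsq
  have e1 := congrFun (congrFun hsq 0) 0
  have e2 := congrFun (congrFun hsq 0) 1
  have e3 := congrFun (congrFun hsq 1) 0
  simp [Matrix.mul_apply, Fin.sum_univ_two, Matrix.one_apply] at e1 e2 e3
  by_cases htr : M 0 0 + M 1 1 = 0
  · -- trace zero case
    have hd11 : M 1 1 = -(M 0 0) := by linear_combination htr
    have hdet : M.det = -1 := by
      rw [Matrix.det_fin_two]
      linear_combination M 0 0 * hd11 - e1
    refine ⟨hdet, ?_⟩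
    rw [hdet] at fA fB fC fD
    by_cases hsp : M 1 0 = 0 ∧ M 0 0 = 1
    · refine ⟨2, M 0 1, fun h => h2 h.1, ?_⟩
      have hx : M 0 0 * 2 + M 1 0 * M 0 1 = 2 := by
        rw [hsp.1, hsp.2]; ring
      have hy : M 0 1 * 2 + M 1 1 * M 0 1 = M 0 1 := by
        linear_combination M 0 1 * hd11 - M 0 1 * hsp.2
      have E := my_eval_act a b c d (M 0 0) (M 0 1) (M 1 0) (M 1 1) 2 (M 0 1)
      rw [fA, fB, fC, fD, hx, hy] at E
      have hgg : 2*(a*2^3 + b*2^2*(M 0 1) + c*2*(M 0 1)^2 + d*(M 0 1)^3) = 0 := by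
        linear_combination -E
      have := (mul_eq_zero.mp hgg).resolve_left h2
      linear_combination this
    · refine ⟨M 1 0, 1 - M 0 0, ?_, ?_⟩
      · rintro ⟨hh1, hh2⟩
        exact hsp ⟨hh1, by linear_combination -hh2⟩
      · have hx : M 0 0 * M 1 0 + M 1 0 * (1 - M 0 0) = M 1 0 := by ring
        have hy : M 0 1 * M 1 0 + M 1 1 * (1 - M 0 0) = 1 - M 0 0 := by
          linear_combination e1 + (1 - M 0 0) * hd11
        have E := my_eval_act a b c d (M 0 0) (M 0 1) (M 1 0) (M 1 1) (M 1 0) (1 - M 0 0)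
        rw [fA, fB, fC, fD, hx, hy] at E
        have hgg : 2*(a*(M 1 0)^3 + b*(M 1 0)^2*(1 - M 0 0) + c*(M 1 0)*(1 - M 0 0)^2
            + d*(1 - M 0 0)^3) = 0 := by
          linear_combination -E
        have := (mul_eq_zero.mp hgg).resolve_left h2
        linear_combination this
  · -- scalar case: M = -1, contradiction with disc ≠ 0
    exfalso
    have hb0 : M 0 1 = 0 := by
      rcases mul_eq_zero.mp (show M 0 1 * (M 0 0 + M 1 1) = 0 by linear_combination e2) with h | h
      · exact h
      · exact absurd h htr
    have hc0 : M 1 0 = 0 := by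
      rcases mul_eq_zero.mp (show M 1 0 * (M 0 0 + M 1 1) = 0 by linear_combination e3) with h | h
      · exact h
      · exact absurd h htr
    have ha2 : (M 0 0 - 1) * (M 0 0 + 1) = 0 := by
      linear_combination e1 - M 1 0 * hb0
    have hα : M 0 0 = -1 := by
      rcases mul_eq_zero.mp ha2 with h | h
      ·
        exfalso
        -- M00 = 1; from e4-like: use det? derive M11 = ±1
        have e4 := congrFun (congrFun hsq 1) 1
        simp [Matrix.mul_apply, Fin.sum_univ_two, Matrix.one_apply] at e4
        have hd2 : (M 1 1 - 1) * (M 1 1 + 1) = 0 := by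
          linear_combination e4 - M 0 1 * hc0
        rcases mul_eq_zero.mp hd2 with h' | h'
        · apply hM1
          ext i j
          fin_cases i <;> fin_cases j <;>
            simp [Matrix.one_apply, hb0, hc0] <;>
            first
            | linear_combination h
            | linear_combination h'
        · exact htr (by linear_combination h + h')
      · linear_combination h
    have hδ1 : M 1 1 = -1 := by
      have e4 := congrFun (congrFun hsq 1) 1
      simp [Matrix.mul_apply, Fin.sum_univ_two, Matrix.one_apply] at e4
      have hd2 : (M 1 1 - 1) * (M 1 1 + 1) = 0 := by
        linear_combination e4 - M 0 1 * hc0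
      rcases mul_eq_zero.mp hd2 with h' | h'
      · exact absurd (by linear_combination hα + h' : M 0 0 + M 1 1 = 0) htr
      · linear_combination h'
    have hdet1 : M.det = 1 := by
      rw [Matrix.det_fin_two, hα, hδ1, hb0, hc0]; ring
    rw [hdet1, hα, hδ1, hb0, hc0] at fA fB fC fD
    simp only [tA, tB, tC, tD] at fA fB fC fD
    have ha : a = 0 := (mul_eq_zero.mp (show (2:K)*a = 0 by linear_combination -fA)).resolve_left h2
    have hb : b = 0 := (mul_eq_zero.mp (show (2:K)*b = 0 by linear_combination -fB)).resolve_left h2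
    have hc : c = 0 := (mul_eq_zero.mp (show (2:K)*c = 0 by linear_combination -fC)).resolve_left h2
    have hd : d = 0 := (mul_eq_zero.mp (show (2:K)*d = 0 by linear_combination -fD)).resolve_left h2
    apply hΔ
    rw [ha, hb, hc, hd]
    simp [cubicDisc]

/-- An automorphism of order 2 of a binary cubic `g` with nonzero discriminant
(under the twisted action `g^M = det(M)⁻¹·g((X Y)M)`, expressed by clearing
the determinant) has determinant `−1`, and `g` has a root in `P¹(K)`;
conversely if `g` has a `K`-rational root then `g` admits an automorphism of
order 2. -/
theorem cubic_order_two_automorphism {K : Type*} [Field K]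
    (h2 : (2:K) ≠ 0) (h3 : (3:K) ≠ 0)
    (a b c d : K) (hΔ : cubicDisc a b c d ≠ 0) :
    (∀ M : Matrix (Fin 2) (Fin 2) K, M.det ≠ 0 → M^2 = 1 → M ≠ 1 →
      (tA a b c d (M 0 0) (M 0 1) (M 1 0) (M 1 1) = M.det * a ∧
       tB a b c d (M 0 0) (M 0 1) (M 1 0) (M 1 1) = M.det * b ∧
       tC a b c d (M 0 0) (M 0 1) (M 1 0) (M 1 1) = M.det * c ∧
       tD a b c d (M 0 0) (M 0 1) (M 1 0) (M 1 1) = M.det * d) →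
      (M.det = -1 ∧ ∃ p q : K, ¬(p = 0 ∧ q = 0) ∧
        a*p^3 + b*p^2*q + c*p*q^2 + d*q^3 = 0))
    ∧ ((∃ p q : K, ¬(p = 0 ∧ q = 0) ∧ a*p^3 + b*p^2*q + c*p*q^2 + d*q^3 = 0) →
        ∃ M : Matrix (Fin 2) (Fin 2) K, M.det ≠ 0 ∧ M^2 = 1 ∧ M ≠ 1 ∧
          tA a b c d (M 0 0) (M 0 1) (M 1 0) (M 1 1) = M.det * a ∧
          tB a b c d (M 0 0) (M 0 1) (M 1 0) (M 1 1) = M.det * b ∧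
          tC a b c d (M 0 0) (M 0 1) (M 1 0) (M 1 1) = M.det * c ∧
          tD a b c d (M 0 0) (M 0 1) (M 1 0) (M 1 1) = M.det * d) := by
  constructor
  · exact my_forward h2 a b c d hΔ
  · rintro ⟨p, q, hpq, hroot⟩
    by_cases hp : p = 0
    · have hq : q ≠ 0 := fun h => hpq ⟨hp, h⟩
      obtain ⟨E, F, G, H, hdet, hA, hC⟩ :=
        my_conv_aux h2 a b c d 0 q 1 0 (by simpa using hq) hΔ
          (by simp only [tA]; rw [hp] at hroot; linear_combination hroot)
      exact my_conv_aux2 h2 a b c d E F G H hdet hA hC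
    · obtain ⟨E, F, G, H, hdet, hA, hC⟩ :=
        my_conv_aux h2 a b c d p q 0 1 (by simpa using hp) hΔ
          (by simp only [tA]; linear_combination hroot)
      exact my_conv_aux2 h2 a b c d E F G H hdet hA hC
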